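/- Let f: ℝⁿ → ℝ be α-strongly convex. Then the convex conjugate f* is everywhere differentiable and ∇f* is (1/α)-Lipschitz continuous: ‖∇f*(x*) − ∇f*(y*)‖ ≤ (1/α)‖x* − y*‖ for all x*, y* ∈ ℝⁿ. -/

import Mathlib

open RealInnerProductSpace

lemma exists_subgradient_zero {n : ℕ} (f : EuclideanSpace ℝ (Fin n) → ℝ)
    (hconv : ConvexOn ℝ Set.univ f) :
    ∃ s : EuclideanSpace ℝ (Fin n), ∀ z, f 0 + ⟪s, z⟫ ≤ f z := by
  have hcont : Continuous f := hconv.locallyLipschitz.continuous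
  set S : Set (EuclideanSpace ℝ (Fin n) × ℝ) := {p | f p.1 < p.2} with hS
  have hopen : IsOpen S := isOpen_lt (hcont.comp continuous_fst) continuous_snd
  have hconvS : Convex ℝ S := by
    intro p hp q hq a b ha hb hab
    simp only [hS, Set.mem_setOf_eq] at *
    have h1 : f (a • p.1 + b • q.1) ≤ a * f p.1 + b * f q.1 :=
      hconv.2 (Set.mem_univ _) (Set.mem_univ _) ha hb hab
    have h2 : a * f p.1 + b * f q.1 < a * p.2 + b * q.2 := by
      rcases eq_or_lt_of_le ha with rfl | ha'
      · simp only [zero_mul, zero_add]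
        have hb1 : b = 1 := by linarith
        nlinarith [hq]
      · rcases eq_or_lt_of_le hb with rfl | hb'
        · have ha1 : a = 1 := by linarith
          nlinarith [hp]
        · nlinarith [mul_lt_mul_of_pos_left hp ha', mul_lt_mul_of_pos_left hq hb']
    calc f ((a • p + b • q).1) = f (a • p.1 + b • q.1) := rfl
    _ < a * p.2 + b * q.2 := lt_of_le_of_lt h1 h2
    _ = (a • p + b • q).2 := rfl
  have hdisj : ((0 : EuclideanSpace ℝ (Fin n)), f 0) ∉ S := by
    simp [hS]
  obtain ⟨L, hL⟩ := geometric_hahn_banach_open_point hconvS hopen hdisj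
  set c : ℝ := L (0, 1) with hc
  have hkey : ∀ x t, f x < t → L (x, 0) + t * c < f 0 * c := by
    intro x t hxt
    have : L (x, t) < L (0, f 0) := hL (x, t) hxt
    have e1 : L (x, t) = L (x, 0) + t * c := by
      have : (x, t) = (x, (0:ℝ)) + t • ((0 : EuclideanSpace ℝ (Fin n)), (1:ℝ)) := by
        simp [Prod.ext_iff]
      rw [this, map_add, map_smul, smul_eq_mul, hc]
    have e2 : L (0, f 0) = f 0 * c := by
      have : ((0 : EuclideanSpace ℝ (Fin n)), f 0) = f 0 • ((0 : EuclideanSpace ℝ (Fin n)), (1:ℝ)) := by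
        simp [Prod.ext_iff]
      rw [this, map_smul, smul_eq_mul, hc]
    rw [e1, e2] at this
    exact this
  have hcneg : c < 0 := by
    have h1 := hkey 0 (f 0 + 1) (by linarith)
    have hL00 : L ((0 : EuclideanSpace ℝ (Fin n)), (0:ℝ)) = 0 := by
      exact map_zero L
    nlinarith [h1, hL00]
  have hle : ∀ x, L (x, 0) + f x * c ≤ f 0 * c := by
    intro x
    apply le_of_forall_pos_le_add
    intro δ hδ
    have hε : (0:ℝ) < δ / (-c) := div_pos hδ (by linarith)
    have := hkey x (f x + δ / (-c)) (by linarith)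
    have hcc : c ≠ 0 := by linarith
    have hnc : (-c) ≠ 0 := ne_of_gt (by linarith)
    have hexp : δ / (-c) * c = -δ := by
      field_simp
    nlinarith [this, hexp]
  refine ⟨(InnerProductSpace.toDual ℝ _).symm
    ((-c⁻¹) • (L.comp (ContinuousLinearMap.inl ℝ _ ℝ))), fun z => ?_⟩
  rw [InnerProductSpace.toDual_symm_apply]
  have := hle z
  simp only [ContinuousLinearMap.smul_apply, ContinuousLinearMap.comp_apply,
    ContinuousLinearMap.inl_apply, smul_eq_mul]
  have hcne : c ≠ 0 := ne_of_lt hcneg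
  have hd : -c⁻¹ * L (z, 0) = -(L (z, 0) / c) := by field_simp
  rw [hd]
  have hq : L (z, 0) = (L (z, 0) / c) * c := by field_simp
  rw [hq] at this
  nlinarith [this, hcneg]

/-- the conjugate of an α-strongly convex function is differentiable
with a (1/α)-Lipschitz-continuous gradient. -/
theorem stmt_14 {n : ℕ} (f : EuclideanSpace ℝ (Fin n) → ℝ) (α : ℝ) (hα : 0 < α)
    (hconv : ConvexOn ℝ Set.univ f)
    (hsc : ∀ x y xs : EuclideanSpace ℝ (Fin n),
      (∀ z, f x + ⟪xs, z - x⟫ ≤ f z) →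
      f x + ⟪xs, y - x⟫ + α / 2 * ‖y - x‖ ^ 2 ≤ f y)
    (fstar : EuclideanSpace ℝ (Fin n) → ℝ)
    (hfstar : ∀ w, fstar w = ⨆ z : EuclideanSpace ℝ (Fin n), (⟪w, z⟫ - f z)) :
    ∃ g : EuclideanSpace ℝ (Fin n) → EuclideanSpace ℝ (Fin n),
      (∀ w, HasGradientAt fstar (g w) w) ∧
      (∀ w v : EuclideanSpace ℝ (Fin n), ‖g w - g v‖ ≤ (1 / α) * ‖w - v‖) := by
  obtain ⟨s₀, hs₀⟩ := exists_subgradient_zero f hconv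
  have hcont : Continuous f := hconv.locallyLipschitz.continuous
  have hquad : ∀ z : EuclideanSpace ℝ (Fin n), f 0 + ⟪s₀, z⟫ + α / 2 * ‖z‖ ^ 2 ≤ f z := by
    intro z
    have := hsc 0 z s₀ (by intro u; simpa using hs₀ u)
    simpa using this
  -- existence of a maximizer, which is a point where w is a subgradient
  have hex : ∀ w : EuclideanSpace ℝ (Fin n), ∃ u, ∀ z, f u + ⟪w, z - u⟫ ≤ f z := by
    intro w
    set R : ℝ := 2 * ‖w - s₀‖ / α + 1 with hR
    have hRpos : 0 < R := by positivity
    have hφcont : Continuous fun z : EuclideanSpace ℝ (Fin n) => ⟪w, z⟫ - f z :=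
      (continuous_const.inner continuous_id).sub hcont
    obtain ⟨u, hu_mem, hu⟩ :=
      (isCompact_closedBall (0 : EuclideanSpace ℝ (Fin n)) R).exists_isMaxOn
        ⟨0, by simp [le_of_lt hRpos]⟩ hφcont.continuousOn
    have hglobal : ∀ z, ⟪w, z⟫ - f z ≤ ⟪w, u⟫ - f u := by
      intro z
      by_cases hz : z ∈ Metric.closedBall (0 : EuclideanSpace ℝ (Fin n)) R
      · exact hu hz
      · have hz' : R < ‖z‖ := by
          simpa [Metric.mem_closedBall, dist_zero_right] using lt_of_not_ge fun h => hz (by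
            simpa [Metric.mem_closedBall, dist_zero_right] using h)
        have h0u : (⟪w, (0 : EuclideanSpace ℝ (Fin n))⟫ - f 0) ≤ ⟪w, u⟫ - f u :=
          hu (by simp [le_of_lt hRpos])
        have hb1 : ⟪w, z⟫ - f z ≤ ⟪w - s₀, z⟫ - f 0 - α / 2 * ‖z‖ ^ 2 := by
          have := hquad z
          rw [inner_sub_left]
          linarith
        have hb2 : ⟪w - s₀, z⟫ ≤ ‖w - s₀‖ * ‖z‖ := real_inner_le_norm _ _
        have hlt : ‖w - s₀‖ * ‖z‖ - α / 2 * ‖z‖ ^ 2 < 0 := by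
          rw [hR] at hz'
          have h1 : 2 * ‖w - s₀‖ / α < ‖z‖ := by linarith
          have h2 : 2 * ‖w - s₀‖ < α * ‖z‖ := by
            rw [div_lt_iff₀ hα] at h1; linarith
          have hzpos : (0:ℝ) < ‖z‖ := by nlinarith [norm_nonneg (w - s₀), div_nonneg (by positivity : (0:ℝ) ≤ 2 * ‖w - s₀‖) hα.le]
          have h3 := mul_lt_mul_of_pos_right h2 hzpos
          nlinarith [h3]
        have : ⟪w, (0 : EuclideanSpace ℝ (Fin n))⟫ = 0 := inner_zero_right w
        nlinarith [hb1, hb2, hlt, h0u]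
    refine ⟨u, fun z => ?_⟩
    have := hglobal z
    rw [inner_sub_right]
    linarith
  choose g hg using hex
  -- Lipschitz estimate
  have hlip : ∀ w v : EuclideanSpace ℝ (Fin n), ‖g w - g v‖ ≤ 1 / α * ‖w - v‖ := by
    intro w v
    have h1 := hsc (g w) (g v) w (hg w)
    have h2 := hsc (g v) (g w) v (hg v)
    have e1 : ⟪w - v, g w - g v⟫ = ⟪w, g w - g v⟫ - ⟪v, g w - g v⟫ := inner_sub_left _ _ _
    have e2 : ⟪w, g v - g w⟫ = -⟪w, g w - g v⟫ := by
      rw [← neg_sub (g w) (g v), inner_neg_right]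
    have e4 : ‖g v - g w‖ = ‖g w - g v‖ := norm_sub_rev _ _
    rw [e4] at h1
    have hkey : α * ‖g w - g v‖ ^ 2 ≤ ⟪w - v, g w - g v⟫ := by linarith
    have hnorm : ⟪w - v, g w - g v⟫ ≤ ‖w - v‖ * ‖g w - g v‖ := real_inner_le_norm _ _
    rcases eq_or_lt_of_le (norm_nonneg (g w - g v)) with h0 | h0
    · rw [← h0]; positivity
    · rw [one_div, inv_mul_eq_div, le_div_iff₀ hα]
      nlinarith [hkey, hnorm, h0]
  -- value of fstar and upper bound
  have hub : ∀ w z : EuclideanSpace ℝ (Fin n), ⟪w, z⟫ - f z ≤ ⟪w, g w⟫ - f (g w) := by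
    intro w z
    have := hg w z
    rw [inner_sub_right] at this
    linarith
  have hval : ∀ w, fstar w = ⟪w, g w⟫ - f (g w) := by
    intro w
    rw [hfstar w]
    apply le_antisymm (ciSup_le (hub w))
    exact le_ciSup ⟨⟪w, g w⟫ - f (g w), by rintro y ⟨z, rfl⟩; exact hub w z⟩ (g w)
  refine ⟨g, fun w => ?_, hlip⟩
  have key : ∀ x : EuclideanSpace ℝ (Fin n),
      0 ≤ fstar x - fstar w - ⟪g w, x - w⟫ ∧
      fstar x - fstar w - ⟪g w, x - w⟫ ≤ 1 / α * ‖x - w‖ ^ 2 := by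
    intro x
    have hcomm : ⟪g w, x - w⟫ = ⟪x - w, g w⟫ := real_inner_comm _ _
    have hl : ⟪x, g w⟫ - f (g w) ≤ fstar x := by rw [hval x]; exact hub x (g w)
    have hl' : ⟪x, g w⟫ = ⟪w, g w⟫ + ⟪x - w, g w⟫ := by
      rw [inner_sub_left]; ring
    have hu1 : fstar w ≥ ⟪w, g x⟫ - f (g x) := by rw [hval w]; exact hub w (g x)
    have hu2 : ⟪x, g x⟫ = ⟪w, g x⟫ + ⟪x - w, g x⟫ := by
      rw [inner_sub_left]; ring
    have hsplit : ⟪x - w, g x⟫ = ⟪x - w, g w⟫ + ⟪x - w, g x - g w⟫ := by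
      rw [inner_sub_right]; ring
    have hbound : ⟪x - w, g x - g w⟫ ≤ ‖x - w‖ * ‖g x - g w‖ := real_inner_le_norm _ _
    have hlipx : ‖g x - g w‖ ≤ 1 / α * ‖x - w‖ := hlip x w
    constructor
    · rw [hval w, hcomm]; linarith
    · have hx : fstar x = ⟪x, g x⟫ - f (g x) := hval x
      have hfin : ‖x - w‖ * ‖g x - g w‖ ≤ 1 / α * ‖x - w‖ ^ 2 := by
        have := mul_le_mul_of_nonneg_left hlipx (norm_nonneg (x - w))
        nlinarith [this]
      rw [hcomm]
      nlinarith [hu1, hbound, hfin, hx, hu2, hsplit]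
  rw [hasGradientAt_iff_hasFDerivAt, hasFDerivAt_iff_isLittleO,
    Asymptotics.isLittleO_iff]
  intro c hc
  filter_upwards [Metric.ball_mem_nhds w (show (0:ℝ) < c * α by positivity)] with x hx
  have hx' : ‖x - w‖ < c * α := by rwa [Metric.mem_ball, dist_eq_norm] at hx
  have hd := key x
  have htd : (InnerProductSpace.toDual ℝ (EuclideanSpace ℝ (Fin n)) (g w)) (x - w)
      = ⟪g w, x - w⟫ := rfl
  rw [htd]
  have habs : ‖fstar x - fstar w - ⟪g w, x - w⟫‖ = fstar x - fstar w - ⟪g w, x - w⟫ :=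
    Real.norm_of_nonneg hd.1
  rw [habs]
  have h2 : 1 / α * ‖x - w‖ ^ 2 ≤ c * ‖x - w‖ := by
    have hsq : ‖x - w‖ ^ 2 = ‖x - w‖ * ‖x - w‖ := sq (‖x - w‖)
    calc 1 / α * ‖x - w‖ ^ 2 = (1 / α * ‖x - w‖) * ‖x - w‖ := by rw [hsq]; ring
    _ ≤ (1 / α * (c * α)) * ‖x - w‖ :=
        mul_le_mul_of_nonneg_right
          (mul_le_mul_of_nonneg_left hx'.le (by positivity)) (norm_nonneg _)
    _ = c * ‖x - w‖ := by field_simp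
  calc fstar x - fstar w - ⟪g w, x - w⟫ ≤ 1 / α * ‖x - w‖ ^ 2 := hd.2
  _ ≤ c * ‖x - w‖ := h2
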